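/- For every integer $k \ge 1$ there is a constant $C_k$ such that for all positive integers $c$, $\left| \frac{1}{\varphi(c)} \sum_{\substack{1 \le y \le c \\ \gcd(y,c)=1}} y^{1/k} - \frac{k}{k+1} c^{1/k} \right| \le C_k \cdot 2^{\omega(c)} \cdot \frac{c^{1/k}}{\varphi(c)} \cdot \max_{d \mid c} d^{-1/k} \cdot d$, and in particular $\frac{1}{\varphi(c)} \sum_{\substack{1 \le y \le c \\ \gcd(y,c)=1}} y^{1/k} = \frac{k}{k+1} c^{1/k} + O_\varepsilon(c^\varepsilon)$ for any $\varepsilon > 0$. -/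

import Mathlib

open Finset ArithmeticFunction
open scoped ArithmeticFunction.Moebius

lemma moebius_sum_real (n : ℕ) :
    ∑ d ∈ n.divisors, ((μ d : ℤ) : ℝ) = if n = 1 then 1 else 0 := by
  have h := congrArg (fun f => f n) moebius_mul_coe_zeta
  simp only [coe_mul_zeta_apply, one_apply] at h
  have h2 := congrArg (fun z : ℤ => (z : ℝ)) h
  push_cast at h2
  rw [h2]


lemma card_coprime_filter (c : ℕ) :
    ((Finset.Icc 1 c).filter (fun y => Nat.gcd y c = 1)).card = c.totient := by
  rw [← Nat.filter_coprime_Ico_eq_totient c 1]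
  congr 1
  rw [add_comm, Finset.Ico_add_one_right_eq_Icc]
  apply Finset.filter_congr
  intro y _
  simp [Nat.Coprime, Nat.gcd_comm]

lemma sum_dvd_Icc (c d : ℕ) (hd : d ∣ c) (hd0 : 0 < d) (g : ℕ → ℝ) :
    ∑ y ∈ (Finset.Icc 1 c).filter (fun y => d ∣ y), g y
      = ∑ m ∈ Finset.Icc 1 (c / d), g (d * m) := by
  have himg : (Finset.Icc 1 c).filter (fun y => d ∣ y)
      = (Finset.Icc 1 (c / d)).image (fun m => d * m) := by
    ext y
    simp only [Finset.mem_filter, Finset.mem_Icc, Finset.mem_image]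
    constructor
    · rintro ⟨⟨h1y, h2y⟩, m, rfl⟩
      refine ⟨m, ⟨?_, ?_⟩, rfl⟩
      · rcases Nat.eq_zero_or_pos m with h | h
        · simp [h] at h1y
        · exact h
      · have : d * m ≤ d * (c / d) := by rw [Nat.mul_div_cancel' hd]; exact h2y
        exact Nat.le_of_mul_le_mul_left this hd0
    · rintro ⟨m, ⟨h1m, h2m⟩, rfl⟩
      refine ⟨⟨?_, ?_⟩, Dvd.intro m rfl⟩
      · exact Nat.one_le_iff_ne_zero.mpr (Nat.mul_ne_zero hd0.ne' (by omega))
      · calc d * m ≤ d * (c / d) := Nat.mul_le_mul_left d h2m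
          _ = c := Nat.mul_div_cancel' hd
  rw [himg, Finset.sum_image]
  intro a _ b _ h
  exact Nat.eq_of_mul_eq_mul_left hd0 h

lemma mobius_filter_sum (c : ℕ) (hc : 0 < c) (f : ℕ → ℝ) :
    ∑ y ∈ (Finset.Icc 1 c).filter (fun y => Nat.gcd y c = 1), f y
      = ∑ d ∈ c.divisors, ((μ d : ℤ) : ℝ) * ∑ m ∈ Finset.Icc 1 (c / d), f (d * m) := by
  rw [Finset.sum_filter]
  have h1 : ∀ y ∈ Finset.Icc 1 c,
      (if Nat.gcd y c = 1 then f y else 0)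
        = ∑ d ∈ c.divisors, (if d ∣ y then ((μ d : ℤ) : ℝ) * f y else 0) := by
    intro y hy
    rw [Finset.mem_Icc] at hy
    have h3 : (Nat.gcd y c).divisors = c.divisors.filter (fun d => d ∣ y) := by
      ext e
      simp only [Nat.mem_divisors, Finset.mem_filter, Nat.dvd_gcd_iff]
      constructor
      · rintro ⟨⟨hey, hec⟩, -⟩
        exact ⟨⟨hec, hc.ne'⟩, hey⟩
      · rintro ⟨⟨hec, -⟩, hey⟩
        exact ⟨⟨hey, hec⟩, Nat.gcd_ne_zero_right hc.ne'⟩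
    calc (if Nat.gcd y c = 1 then f y else 0)
        = (∑ d ∈ (Nat.gcd y c).divisors, ((μ d : ℤ) : ℝ)) * f y := by
          rw [moebius_sum_real]; split <;> simp
      _ = ∑ d ∈ c.divisors.filter (fun d => d ∣ y), ((μ d : ℤ) : ℝ) * f y := by
          rw [h3, Finset.sum_mul]
      _ = ∑ d ∈ c.divisors, (if d ∣ y then ((μ d : ℤ) : ℝ) * f y else 0) :=
          Finset.sum_filter _ _
  rw [Finset.sum_congr rfl h1, Finset.sum_comm]
  refine Finset.sum_congr rfl fun d hd => ?_
  rw [← Finset.sum_filter, Finset.mul_sum]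
  exact sum_dvd_Icc c d (Nat.dvd_of_mem_divisors hd) (Nat.pos_of_mem_divisors hd)
    (fun y => ((μ d : ℤ) : ℝ) * f y)


lemma sum_rpow_est (α : ℝ) (h0 : 0 < α) (N : ℕ) :
    |∑ m ∈ Finset.Icc 1 N, (m : ℝ) ^ α - (N : ℝ) ^ (α + 1) / (α + 1)| ≤ (N : ℝ) ^ α := by
  have hmono : MonotoneOn (fun x : ℝ => x ^ α) (Set.Icc (0:ℝ) (0 + N)) :=
    fun x hx y _ hxy => Real.rpow_le_rpow hx.1 hxy h0.le
  have hint : ∫ x in (0:ℝ)..(0 + N : ℝ), x ^ α = (N : ℝ) ^ (α + 1) / (α + 1) := by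
    rw [integral_rpow (Or.inl (by linarith))]
    rw [Real.zero_rpow (by positivity)]
    norm_num
  have hsum : ∑ m ∈ Finset.Icc 1 N, (m : ℝ) ^ α
      = ∑ i ∈ Finset.range N, ((0:ℝ) + (i + 1 : ℕ)) ^ α := by
    rw [← Finset.Ico_add_one_right_eq_Icc, Finset.sum_Ico_eq_sum_range]
    simp [add_comm]
  simp only [zero_add] at hsum
  have hlow := hmono.integral_le_sum
  rw [hint] at hlow
  simp only [zero_add] at hlow
  have hup := hmono.sum_le_integral
  rw [hint] at hup
  simp only [zero_add] at hup
  have hshift : ∑ i ∈ Finset.range N, ((i + 1 : ℕ) : ℝ) ^ α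
      ≤ (∑ i ∈ Finset.range N, ((i : ℕ) : ℝ) ^ α) + (N : ℝ) ^ α := by
    rcases Nat.eq_zero_or_pos N with h | h
    · simp [h, Real.zero_rpow h0.ne']
    · have e1 := Finset.sum_range_succ' (fun i => ((i:ℕ) : ℝ) ^ α) N
      have e2 := Finset.sum_range_succ (fun i => ((i:ℕ) : ℝ) ^ α) N
      simp only [Nat.cast_zero, Real.zero_rpow h0.ne', add_zero] at e1
      rw [e2] at e1
      exact le_of_eq e1.symm
  rw [hsum, abs_le]
  exact ⟨by linarith, by linarith⟩


lemma sum_abs_moebius_le (c : ℕ) (hc : 0 < c) :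
    ∑ d ∈ c.divisors, |((μ d : ℤ) : ℝ)| ≤ 2 ^ c.primeFactors.card := by
  have h1 : ∀ d, |((μ d : ℤ) : ℝ)| = if Squarefree d then 1 else 0 := by
    intro d
    rw [← Int.cast_abs, abs_moebius]
    split <;> norm_num
  calc ∑ d ∈ c.divisors, |((μ d : ℤ) : ℝ)|
      = ∑ d ∈ c.divisors.filter Squarefree, (1:ℝ) := by
        rw [Finset.sum_filter]; exact Finset.sum_congr rfl fun d _ => h1 d
    _ = ((c.divisors.filter Squarefree).card : ℝ) := by simp
    _ ≤ ((c.primeFactors.powerset.card : ℕ) : ℝ) := by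
        have : (c.divisors.filter Squarefree).card ≤ c.primeFactors.powerset.card := by
          apply Finset.card_le_card_of_injOn (fun d => d.primeFactors)
          · intro d hd
            rw [Finset.mem_coe, Finset.mem_filter] at hd
            exact Finset.mem_powerset.mpr
              (Nat.primeFactors_mono (Nat.dvd_of_mem_divisors hd.1) hc.ne')
          · intro a ha b hb h
            rw [Finset.coe_filter] at ha hb
            have h' : a.primeFactors = b.primeFactors := h
            rw [← Nat.prod_primeFactors_of_squarefree ha.2,
              ← Nat.prod_primeFactors_of_squarefree hb.2, h']
        exact_mod_cast this
    _ = 2 ^ c.primeFactors.card := by rw [Finset.card_powerset]; push_cast; ring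

lemma le_totient_mul_two_pow (c : ℕ) (hc : 0 < c) :
    c ≤ c.totient * 2 ^ c.primeFactors.card := by
  rw [Nat.totient_eq_div_primeFactors_mul]
  have hdvd := Nat.prod_primeFactors_dvd c
  calc c = c / (∏ p ∈ c.primeFactors, p) * (∏ p ∈ c.primeFactors, p) :=
        (Nat.div_mul_cancel hdvd).symm
    _ ≤ c / (∏ p ∈ c.primeFactors, p) * (∏ p ∈ c.primeFactors, ((p - 1) * 2)) := by
        apply Nat.mul_le_mul_left
        apply Finset.prod_le_prod'
        intro p hp
        have := (Nat.prime_of_mem_primeFactors hp).two_le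
        omega
    _ = c / (∏ p ∈ c.primeFactors, p) * (∏ p ∈ c.primeFactors, (p - 1)) *
          2 ^ c.primeFactors.card := by
        rw [Finset.prod_mul_distrib, Finset.prod_const, mul_assoc]

lemma four_pow_omega_le (ε : ℝ) (hε : 0 < ε) :
    ∃ C : ℝ, 0 < C ∧ ∀ c : ℕ, 0 < c →
      (4 : ℝ) ^ c.primeFactors.card ≤ C * (c : ℝ) ^ ε := by
  classical
  set T : ℕ := ⌈(4 : ℝ) ^ (1 / ε)⌉₊ with hT
  refine ⟨4 ^ (T + 1), by positivity, fun c hc => ?_⟩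
  set S₁ := c.primeFactors.filter (fun p => p ≤ T) with hS1
  set S₂ := c.primeFactors.filter (fun p => ¬ p ≤ T) with hS2
  have hcard : c.primeFactors.card = S₁.card + S₂.card :=
    (Finset.card_filter_add_card_filter_not _).symm
  have h1 : (4 : ℝ) ^ S₁.card ≤ 4 ^ (T + 1) := by
    apply pow_le_pow_right₀ (by norm_num)
    have : S₁ ⊆ Finset.range (T + 1) := by
      intro p hp
      rw [hS1, Finset.mem_filter] at hp
      rw [Finset.mem_range]
      omega
    calc S₁.card ≤ (Finset.range (T + 1)).card := Finset.card_le_card this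
      _ = T + 1 := Finset.card_range _
  have h2 : (4 : ℝ) ^ S₂.card ≤ (c : ℝ) ^ ε := by
    have hstep : ∀ p ∈ S₂, (4 : ℝ) ≤ (p : ℝ) ^ ε := by
      intro p hp
      rw [hS2, Finset.mem_filter] at hp
      have hpT : T < p := by omega
      have h4p : (4 : ℝ) ^ (1 / ε) ≤ (p : ℝ) := by
        calc (4 : ℝ) ^ (1 / ε) ≤ (T : ℝ) := Nat.le_ceil _
          _ ≤ (p : ℝ) := by exact_mod_cast hpT.le
      calc (4 : ℝ) = ((4 : ℝ) ^ (1 / ε)) ^ ε := by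
            rw [← Real.rpow_mul (by norm_num : (0:ℝ) ≤ 4), one_div_mul_cancel hε.ne',
              Real.rpow_one]
          _ ≤ (p : ℝ) ^ ε := Real.rpow_le_rpow (by positivity) h4p hε.le
    calc (4 : ℝ) ^ S₂.card = ∏ _p ∈ S₂, (4 : ℝ) := by rw [Finset.prod_const]
      _ ≤ ∏ p ∈ S₂, (p : ℝ) ^ ε := Finset.prod_le_prod (fun _ _ => by norm_num) hstep
      _ = (∏ p ∈ S₂, (p : ℝ)) ^ ε := Real.finset_prod_rpow _ _ (fun p _ => by positivity) _
      _ ≤ (c : ℝ) ^ ε := by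
          apply Real.rpow_le_rpow (by positivity) _ hε.le
          have hdvd : (∏ p ∈ S₂, p) ∣ c := by
            refine dvd_trans ?_ (Nat.prod_primeFactors_dvd c)
            exact Finset.prod_dvd_prod_of_subset _ _ _ (Finset.filter_subset _ _)
          rw [← Nat.cast_prod]
          exact_mod_cast Nat.le_of_dvd hc hdvd
  calc (4 : ℝ) ^ c.primeFactors.card = 4 ^ S₁.card * 4 ^ S₂.card := by
        rw [hcard, pow_add]
    _ ≤ 4 ^ (T + 1) * (c : ℝ) ^ ε := by
        apply mul_le_mul h1 h2 (by positivity) (by positivity)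

lemma core_est (k : ℕ) (hk : 1 ≤ k) (c : ℕ) (hc : 0 < c) :
    |(∑ y ∈ (Finset.Icc 1 c).filter (fun y => Nat.gcd y c = 1), (y : ℝ) ^ ((1:ℝ)/k))
        - (k : ℝ) / (k + 1) * (c : ℝ) ^ ((1:ℝ)/k) * (c.totient : ℝ)|
      ≤ 2 ^ c.primeFactors.card * (c : ℝ) ^ ((1:ℝ)/k) := by
  have hk0 : (0:ℝ) < k := by exact_mod_cast hk
  set α : ℝ := (1:ℝ)/k with hα
  have hα0 : 0 < α := by positivity
  have hfrac : (k:ℝ)/(k+1) = 1/(α+1) := by rw [hα, div_add_one hk0.ne', one_div_div]; ring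
  have hS := mobius_filter_sum c hc (fun y => (y:ℝ) ^ α)
  have hφ : (c.totient : ℝ) = ∑ d ∈ c.divisors, ((μ d : ℤ):ℝ) * ((c/d : ℕ):ℝ) := by
    have h := mobius_filter_sum c hc (fun _ => (1:ℝ))
    rw [← card_coprime_filter c]
    simp only [Finset.sum_const, nsmul_eq_mul, mul_one, Nat.card_Icc,
      Nat.add_sub_cancel] at h
    exact_mod_cast h
  have key : ∀ d ∈ c.divisors,
      ((μ d : ℤ):ℝ) * (∑ m ∈ Finset.Icc 1 (c/d), ((d * m : ℕ):ℝ) ^ α)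
          - (k:ℝ)/(k+1) * (c:ℝ)^α * (((μ d : ℤ):ℝ) * ((c/d : ℕ):ℝ))
        = ((μ d : ℤ):ℝ) * (d:ℝ)^α *
            ((∑ m ∈ Finset.Icc 1 (c/d), (m:ℝ)^α) - ((c/d : ℕ):ℝ)^(α+1)/(α+1)) := by
    intro d hd
    have hd0 : 0 < d := Nat.pos_of_mem_divisors hd
    have hdc : d ∣ c := Nat.dvd_of_mem_divisors hd
    have he0 : 0 < c / d := Nat.div_pos (Nat.le_of_dvd hc hdc) hd0
    have h1 : (∑ m ∈ Finset.Icc 1 (c/d), ((d * m : ℕ):ℝ) ^ α)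
        = (d:ℝ)^α * ∑ m ∈ Finset.Icc 1 (c/d), (m:ℝ)^α := by
      rw [Finset.mul_sum]
      refine Finset.sum_congr rfl fun m _ => ?_
      push_cast
      rw [Real.mul_rpow (by positivity) (by positivity)]
    have h2 : (d:ℝ)^α * ((c/d : ℕ):ℝ)^(α+1) = (c:ℝ)^α * ((c/d : ℕ):ℝ) := by
      rw [Real.rpow_add_one (by exact_mod_cast he0.ne'), ← mul_assoc,
        ← Real.mul_rpow (by positivity) (by positivity), ← Nat.cast_mul,
        Nat.mul_div_cancel' hdc]
    rw [h1, hfrac]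
    linear_combination (((μ d : ℤ):ℝ)/(α+1)) * h2
  calc |(∑ y ∈ (Finset.Icc 1 c).filter (fun y => Nat.gcd y c = 1), (y : ℝ) ^ α)
        - (k : ℝ) / (k + 1) * (c : ℝ) ^ α * (c.totient : ℝ)|
      = |∑ d ∈ c.divisors, ((μ d : ℤ):ℝ) * (d:ℝ)^α *
            ((∑ m ∈ Finset.Icc 1 (c/d), (m:ℝ)^α) - ((c/d : ℕ):ℝ)^(α+1)/(α+1))| := by
        rw [hS, hφ, Finset.mul_sum, ← Finset.sum_sub_distrib]
        congr 1
        exact Finset.sum_congr rfl key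
    _ ≤ ∑ d ∈ c.divisors, |((μ d : ℤ):ℝ)| * (d:ℝ)^α *
            |(∑ m ∈ Finset.Icc 1 (c/d), (m:ℝ)^α) - ((c/d : ℕ):ℝ)^(α+1)/(α+1)| := by
        refine (Finset.abs_sum_le_sum_abs _ _).trans (le_of_eq ?_)
        refine Finset.sum_congr rfl fun d _ => ?_
        rw [abs_mul, abs_mul, abs_of_nonneg (Real.rpow_nonneg (Nat.cast_nonneg d) α)]
    _ ≤ ∑ d ∈ c.divisors, |((μ d : ℤ):ℝ)| * (c:ℝ)^α := by
        refine Finset.sum_le_sum fun d hd => ?_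
        have hdc : d ∣ c := Nat.dvd_of_mem_divisors hd
        have hb := sum_rpow_est α hα0 (c/d)
        calc |((μ d : ℤ):ℝ)| * (d:ℝ)^α *
              |(∑ m ∈ Finset.Icc 1 (c/d), (m:ℝ)^α) - ((c/d : ℕ):ℝ)^(α+1)/(α+1)|
            ≤ |((μ d : ℤ):ℝ)| * (d:ℝ)^α * ((c/d : ℕ):ℝ)^α := by
              apply mul_le_mul_of_nonneg_left hb (by positivity)
          _ = |((μ d : ℤ):ℝ)| * (c:ℝ)^α := by
              rw [mul_assoc, ← Real.mul_rpow (by positivity) (by positivity),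
                ← Nat.cast_mul, Nat.mul_div_cancel' hdc]
    _ = (∑ d ∈ c.divisors, |((μ d : ℤ):ℝ)|) * (c:ℝ)^α := by rw [Finset.sum_mul]
    _ ≤ 2 ^ c.primeFactors.card * (c:ℝ)^α :=
        mul_le_mul_of_nonneg_right (sum_abs_moebius_le c hc) (by positivity)

theorem coprime_sum_rpow_asymptotic (k : ℕ) (hk : 1 ≤ k) :
    (∃ C : ℝ, 0 < C ∧ ∀ c : ℕ, 0 < c →
      |(1 / (Nat.totient c : ℝ)) *
          (∑ y ∈ (Finset.Icc 1 c).filter (fun y => Nat.gcd y c = 1),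
            (y : ℝ) ^ ((1 : ℝ) / k)) -
          (k : ℝ) / (k + 1) * (c : ℝ) ^ ((1 : ℝ) / k)|
        ≤ C * 2 ^ c.primeFactors.card * ((c : ℝ) ^ ((1 : ℝ) / k) / (Nat.totient c : ℝ)) *
            (⨆ d : c.divisors, ((d : ℕ) : ℝ) ^ (-(1 : ℝ) / k) * ((d : ℕ) : ℝ))) ∧
    ∀ ε : ℝ, 0 < ε → ∃ C : ℝ, 0 < C ∧ ∀ c : ℕ, 0 < c →
      |(1 / (Nat.totient c : ℝ)) *
          (∑ y ∈ (Finset.Icc 1 c).filter (fun y => Nat.gcd y c = 1),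
            (y : ℝ) ^ ((1 : ℝ) / k)) -
          (k : ℝ) / (k + 1) * (c : ℝ) ^ ((1 : ℝ) / k)|
        ≤ C * (c : ℝ) ^ ε := by
  have hk0 : (0:ℝ) < k := by exact_mod_cast hk
  -- common bound
  have main : ∀ c : ℕ, 0 < c →
      |(1 / (Nat.totient c : ℝ)) *
          (∑ y ∈ (Finset.Icc 1 c).filter (fun y => Nat.gcd y c = 1),
            (y : ℝ) ^ ((1 : ℝ) / k)) -
          (k : ℝ) / (k + 1) * (c : ℝ) ^ ((1 : ℝ) / k)|
        ≤ 2 ^ c.primeFactors.card * ((c : ℝ) ^ ((1 : ℝ) / k) / (Nat.totient c : ℝ)) := by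
    intro c hc
    have hφ0 : 0 < (c.totient : ℝ) := by exact_mod_cast Nat.totient_pos.mpr hc
    have hrw : (1 / (Nat.totient c : ℝ)) *
          (∑ y ∈ (Finset.Icc 1 c).filter (fun y => Nat.gcd y c = 1),
            (y : ℝ) ^ ((1 : ℝ) / k)) -
          (k : ℝ) / (k + 1) * (c : ℝ) ^ ((1 : ℝ) / k)
        = (1 / (Nat.totient c : ℝ)) *
          ((∑ y ∈ (Finset.Icc 1 c).filter (fun y => Nat.gcd y c = 1),
            (y : ℝ) ^ ((1 : ℝ) / k)) -
            (k : ℝ) / (k + 1) * (c : ℝ) ^ ((1 : ℝ) / k) * (c.totient : ℝ)) := by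
      field_simp
    rw [hrw, abs_mul, abs_of_pos (by positivity : (0:ℝ) < 1 / (c.totient : ℝ))]
    calc 1 / (c.totient : ℝ) *
          |(∑ y ∈ (Finset.Icc 1 c).filter (fun y => Nat.gcd y c = 1),
            (y : ℝ) ^ ((1 : ℝ) / k)) -
            (k : ℝ) / (k + 1) * (c : ℝ) ^ ((1 : ℝ) / k) * (c.totient : ℝ)|
        ≤ 1 / (c.totient : ℝ) * (2 ^ c.primeFactors.card * (c : ℝ) ^ ((1:ℝ)/k)) :=
          mul_le_mul_of_nonneg_left (core_est k hk c hc) (by positivity)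
      _ = 2 ^ c.primeFactors.card * ((c : ℝ) ^ ((1 : ℝ) / k) / (Nat.totient c : ℝ)) := by
          ring
  constructor
  · refine ⟨1, one_pos, fun c hc => ?_⟩
    have hM : (1:ℝ) ≤ ⨆ d : c.divisors, ((d : ℕ) : ℝ) ^ (-(1 : ℝ) / k) * ((d : ℕ) : ℝ) := by
      have h1 : (⟨1, Nat.one_mem_divisors.mpr hc.ne'⟩ : c.divisors) = _ := rfl
      have hbdd : BddAbove (Set.range fun d : c.divisors =>
          ((d : ℕ) : ℝ) ^ (-(1 : ℝ) / k) * ((d : ℕ) : ℝ)) :=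
        Set.Finite.bddAbove (Set.finite_range _)
      have := le_ciSup hbdd (⟨1, Nat.one_mem_divisors.mpr hc.ne'⟩ : c.divisors)
      simpa using this
    calc _ ≤ 2 ^ c.primeFactors.card * ((c : ℝ) ^ ((1 : ℝ) / k) / (Nat.totient c : ℝ)) :=
          main c hc
      _ ≤ 1 * 2 ^ c.primeFactors.card * ((c : ℝ) ^ ((1 : ℝ) / k) / (Nat.totient c : ℝ)) *
            (⨆ d : c.divisors, ((d : ℕ) : ℝ) ^ (-(1 : ℝ) / k) * ((d : ℕ) : ℝ)) := by
          rw [one_mul]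
          nth_rewrite 1 [← mul_one (2 ^ c.primeFactors.card *
            ((c : ℝ) ^ ((1 : ℝ) / k) / (Nat.totient c : ℝ)))]
          apply mul_le_mul_of_nonneg_left hM
          have hφ0 : 0 < (c.totient : ℝ) := by exact_mod_cast Nat.totient_pos.mpr hc
          positivity
  · intro ε hε
    obtain ⟨C, hC, hG⟩ := four_pow_omega_le ε hε
    refine ⟨C, hC, fun c hc => ?_⟩
    have hφ0 : 0 < (c.totient : ℝ) := by exact_mod_cast Nat.totient_pos.mpr hc
    have hc1 : (1:ℝ) ≤ c := by exact_mod_cast hc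
    have hcα : (c : ℝ) ^ ((1:ℝ)/k) ≤ (c : ℝ) := by
      nth_rewrite 2 [← Real.rpow_one (c : ℝ)]
      apply Real.rpow_le_rpow_of_exponent_le hc1
      rw [div_le_one hk0]
      exact_mod_cast hk
    have hdiv : (c : ℝ) / (c.totient : ℝ) ≤ 2 ^ c.primeFactors.card := by
      rw [div_le_iff₀ hφ0]
      have := le_totient_mul_two_pow c hc
      calc (c:ℝ) ≤ ((c.totient * 2 ^ c.primeFactors.card : ℕ) : ℝ) := by exact_mod_cast this
        _ = 2 ^ c.primeFactors.card * (c.totient : ℝ) := by push_cast; ring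
    calc _ ≤ 2 ^ c.primeFactors.card * ((c : ℝ) ^ ((1 : ℝ) / k) / (Nat.totient c : ℝ)) :=
          main c hc
      _ ≤ 2 ^ c.primeFactors.card * ((c : ℝ) / (Nat.totient c : ℝ)) := by
          apply mul_le_mul_of_nonneg_left _ (by positivity)
          gcongr
      _ ≤ 2 ^ c.primeFactors.card * 2 ^ c.primeFactors.card :=
          mul_le_mul_of_nonneg_left hdiv (by positivity)
      _ = (4:ℝ) ^ c.primeFactors.card := by rw [← mul_pow]; norm_num
      _ ≤ C * (c : ℝ) ^ ε := hG c hc
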